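/- Let A, B be positive definite matrices and 0 ≤ t ≤ 1. Then (A^{-1} ♮_t B^{-1})^{-1} = A ♮_t B, where ♮_t denotes the weighted spectral geometric mean A♮_t B = (A^{-1}♯B)^t A (A^{-1}♯B)^t. -/

import Mathlib

open Matrix

variable {n : Type*} [Fintype n] [DecidableEq n]

/-- Real power of a matrix, defined via the spectral decomposition for Hermitian matrices. -/
noncomputable def mpow (A : Matrix n n ℝ) (t : ℝ) : Matrix n n ℝ :=
  if hA : A.IsHermitian then
    (hA.eigenvectorUnitary : Matrix n n ℝ) * Matrix.diagonal (fun i => hA.eigenvalues i ^ t) *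
      star (hA.eigenvectorUnitary : Matrix n n ℝ)
  else A

lemma contOn_finite {s : Set ℝ} (hs : s.Finite) (f : ℝ → ℝ) : ContinuousOn f s := by
  rw [continuousOn_iff_continuous_restrict]
  have := hs.to_subtype
  exact continuous_of_discreteTopology

lemma contOn (f : ℝ → ℝ) (A : Matrix n n ℝ) : ContinuousOn f (spectrum ℝ A) :=
  contOn_finite A.finite_real_spectrum f

lemma spectrum_pos {A : Matrix n n ℝ} (hA : A.PosDef) : ∀ x ∈ spectrum ℝ A, 0 < x := by
  intro x hx
  rw [hA.1.spectrum_real_eq_range_eigenvalues] at hx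
  obtain ⟨i, rfl⟩ := hx
  exact hA.eigenvalues_pos i

lemma mpow_eq_cfc {A : Matrix n n ℝ} (hA : A.IsHermitian) (t : ℝ) :
    mpow A t = cfc (fun x : ℝ => x ^ t) A := by
  rw [mpow, dif_pos hA, Matrix.IsHermitian.cfc_eq hA, Matrix.IsHermitian.cfc]
  congr

lemma posDef_conj {A B : Matrix n n ℝ} (hA : A.PosDef) (hB : IsUnit B) :
    (Bᴴ * A * B).PosDef := by
  refine Matrix.PosDef.of_dotProduct_mulVec_pos (Matrix.isHermitian_conjTranspose_mul_mul B hA.1) fun x hx => ?_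
  have hBx : B *ᵥ x ≠ 0 := by
    intro h
    apply hx
    have := congrArg (B⁻¹ *ᵥ ·) h
    simpa [Matrix.mulVec_mulVec, Matrix.nonsing_inv_mul B ((Matrix.isUnit_iff_isUnit_det B).mp hB)]
      using this
  simpa only [star_mulVec, Matrix.dotProduct_mulVec, Matrix.vecMul_vecMul] using hA.dotProduct_mulVec_pos hBx

lemma mpow_posDef {A : Matrix n n ℝ} (hA : A.PosDef) (t : ℝ) : (mpow A t).PosDef := by
  rw [mpow, dif_pos hA.1]
  have hU : ((hA.1.eigenvectorUnitary : Matrix n n ℝ)) ∈ unitary (Matrix n n ℝ) :=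
    SetLike.coe_mem _
  have h1 : star (hA.1.eigenvectorUnitary : Matrix n n ℝ) *
      (hA.1.eigenvectorUnitary : Matrix n n ℝ) = 1 := Unitary.star_mul_self_of_mem hU
  have h2 : (hA.1.eigenvectorUnitary : Matrix n n ℝ) *
      star (hA.1.eigenvectorUnitary : Matrix n n ℝ) = 1 := Unitary.mul_star_self_of_mem hU
  have hsU : IsUnit (star (hA.1.eigenvectorUnitary : Matrix n n ℝ)) :=
    ⟨⟨_, _, h1, h2⟩, rfl⟩
  have hD : (Matrix.diagonal (fun i => hA.1.eigenvalues i ^ t)).PosDef :=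
    Matrix.PosDef.diagonal (fun i => Real.rpow_pos_of_pos (hA.eigenvalues_pos i) t)
  have := posDef_conj hD hsU
  rwa [← Matrix.star_eq_conjTranspose, star_star] at this

lemma mpow_mul_mpow {A : Matrix n n ℝ} (hA : A.PosDef) (s u : ℝ) :
    mpow A s * mpow A u = mpow A (s + u) := by
  rw [mpow_eq_cfc hA.1, mpow_eq_cfc hA.1, mpow_eq_cfc hA.1,
    ← cfc_mul _ _ A (contOn _ A) (contOn _ A)]
  exact cfc_congr fun x hx => (Real.rpow_add (spectrum_pos hA x hx) s u).symm

lemma mpow_zero {A : Matrix n n ℝ} (hA : A.IsHermitian) : mpow A 0 = 1 := by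
  rw [mpow_eq_cfc hA]
  have : cfc (fun x : ℝ => x ^ (0:ℝ)) A = cfc (1 : ℝ → ℝ) A :=
    cfc_congr fun x _ => Real.rpow_zero x
  rw [this]
  exact cfc_one ℝ A hA

lemma mpow_one {A : Matrix n n ℝ} (hA : A.PosDef) : mpow A 1 = A := by
  rw [mpow_eq_cfc hA.1]
  have : cfc (fun x : ℝ => x ^ (1:ℝ)) A = cfc (id : ℝ → ℝ) A :=
    cfc_congr fun x _ => Real.rpow_one x
  rw [this]
  exact cfc_id ℝ A hA.1

lemma mpow_inv_eq {A : Matrix n n ℝ} (hA : A.PosDef) (s : ℝ) :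
    (mpow A s)⁻¹ = mpow A (-s) := by
  refine Matrix.inv_eq_right_inv ?_
  rw [mpow_mul_mpow hA, add_neg_cancel, mpow_zero hA.1]

lemma mpow_matrix_inv {A : Matrix n n ℝ} (hA : A.PosDef) (s : ℝ) :
    mpow A⁻¹ s = mpow A (-s) := by
  have hAi : A⁻¹ = mpow A (-1) := by rw [← mpow_inv_eq hA, mpow_one hA]
  have hP : (mpow A (-1)).PosDef := mpow_posDef hA (-1)
  have h : cfc ((fun x : ℝ => x ^ s) ∘ (fun x : ℝ => x ^ (-1:ℝ))) A
      = cfc (fun x : ℝ => x ^ s) (cfc (fun x : ℝ => x ^ (-1:ℝ)) A) :=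
    cfc_comp _ _ A (show IsSelfAdjoint A from hA.1)
      (contOn_finite ((Matrix.finite_real_spectrum (A := A)).image _) _) (contOn _ A)
  rw [hAi, mpow_eq_cfc hP.1, mpow_eq_cfc hA.1 (-1), ← h, mpow_eq_cfc hA.1]
  refine cfc_congr fun x hx => ?_
  have hx0 := spectrum_pos hA x hx
  simp only [Function.comp_apply]
  rw [← Real.rpow_mul hx0.le]
  norm_num

/-- The weighted geometric mean `A ♯ₜ B = A^{1/2} (A^{-1/2} B A^{-1/2})^t A^{1/2}`. -/
noncomputable def gmean (t : ℝ) (A B : Matrix n n ℝ) : Matrix n n ℝ :=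
  mpow A (1/2) * mpow (mpow A (-(1/2)) * B * mpow A (-(1/2))) t * mpow A (1/2)

lemma inner_posDef {A B : Matrix n n ℝ} (hA : A.PosDef) (hB : B.PosDef) :
    (mpow A (-(1/2)) * B * mpow A (-(1/2))).PosDef := by
  have hXi := mpow_posDef hA (-(1/2))
  have := posDef_conj hB hXi.isUnit
  rwa [hXi.1.eq] at this

lemma gmean_posDef (t : ℝ) {A B : Matrix n n ℝ} (hA : A.PosDef) (hB : B.PosDef) :
    (gmean t A B).PosDef := by
  have hX := mpow_posDef hA (1/2)
  have := posDef_conj (mpow_posDef (inner_posDef hA hB) t) hX.isUnit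
  rwa [hX.1.eq] at this

lemma gmean_inv (t : ℝ) {A B : Matrix n n ℝ} (hA : A.PosDef) (hB : B.PosDef) :
    gmean t A⁻¹ B⁻¹ = (gmean t A B)⁻¹ := by
  have hM := inner_posDef hA hB
  have hMinv : (mpow A (-(1/2)) * B * mpow A (-(1/2)))⁻¹
      = mpow A (1/2) * B⁻¹ * mpow A (1/2) := by
    simp [Matrix.mul_inv_rev, mpow_inv_eq hA, mul_assoc]
  unfold gmean
  rw [mpow_matrix_inv hA (1/2), mpow_matrix_inv hA (-(1/2)), neg_neg, ← hMinv,
    mpow_matrix_inv hM t, ← mpow_inv_eq hM]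
  simp [Matrix.mul_inv_rev, mpow_inv_eq hA, mul_assoc]

/-- The weighted spectral geometric mean `A ♮ₜ B = (A⁻¹ ♯ B)^t A (A⁻¹ ♯ B)^t`. -/
noncomputable def smean (t : ℝ) (A B : Matrix n n ℝ) : Matrix n n ℝ :=
  mpow (gmean (1/2) A⁻¹ B) t * A * mpow (gmean (1/2) A⁻¹ B) t

theorem smean_inv_inv (t : ℝ) (ht0 : 0 ≤ t) (ht1 : t ≤ 1)
    (A B : Matrix n n ℝ) (hA : A.PosDef) (hB : B.PosDef) :
    (smean t A⁻¹ B⁻¹)⁻¹ = smean t A B := by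
  have hAi : (A⁻¹).PosDef := hA.inv
  have hG : (gmean (1/2) A⁻¹ B).PosDef := gmean_posDef _ hAi hB
  have key : gmean (1/2) A⁻¹⁻¹ B⁻¹ = (gmean (1/2) A⁻¹ B)⁻¹ := gmean_inv _ hAi hB
  unfold smean
  rw [key, mpow_matrix_inv hG, ← mpow_inv_eq hG]
  have h1 := Matrix.nonsing_inv_nonsing_inv (mpow (gmean (1/2) A⁻¹ B) t)
    ((Matrix.isUnit_iff_isUnit_det _).mp (mpow_posDef hG t).isUnit)
  have h2 := Matrix.nonsing_inv_nonsing_inv A ((Matrix.isUnit_iff_isUnit_det _).mp hA.isUnit)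
  rw [Matrix.mul_inv_rev, Matrix.mul_inv_rev, h1, h2, ← mul_assoc]
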